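/- arXiv:2509.23458 — 2 statements merged into one kernel-verified Lean document; each statement's English description precedes it below -/
import Mathlib

section
/- Let G = (V, E, w) be a weighted digraph, let π = (v₀, v₁, …, v_q) be a shortest path in G, and let x ∈ V be a vertex from which at least one vertex of π is reachable. Let ρ = min_{0≤i≤q} d_G(x, v_i), and for R ≥ 0 let S(R) = {i ∈ {0, …, q} : d_G(x, v_i) ≤ R}. Then the set {R ≥ ρ : S(R) is upward closed in {0, …, q}} is nonempty and attains a minimum η, and for m = min S(η) it holds that η − ρ ≤ d_G(v_m, v_q). -/
open scoped ENNReal BigOperators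

/-- A weighted digraph: edges `E` with no self-loops and positive real weights. -/
structure WDigraph (V : Type) where
  E : V → V → Prop
  no_self : ∀ v : V, ¬ E v v
  w : V → V → ℝ
  w_pos : ∀ u v : V, E u v → 0 < w u v

namespace WDigraph

variable {V : Type}

/-- `PathW G u v c`: there is a directed path from `u` to `v` in `G` of total weight `c`. -/
inductive PathW (G : WDigraph V) : V → V → ℝ → Prop
  | nil (u : V) : PathW G u u 0
  | cons {u x v : V} {c : ℝ} : G.E u x → PathW G x v c → PathW G u v (G.w u x + c)

/-- `u ⇝_G v`: there is a directed path from `u` to `v`. -/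
def Reach (G : WDigraph V) (u v : V) : Prop := Relation.ReflTransGen G.E u v

/-- The shortest-path quasimetric: infimum of path weights, `∞` if no path exists. -/
noncomputable def dist (G : WDigraph V) (u v : V) : ℝ≥0∞ :=
  ⨅ (c : ℝ) (_ : G.PathW u v c), ENNReal.ofReal c

/-- A DAG: no vertex has a nonempty directed path to itself. -/
def IsDAG (G : WDigraph V) : Prop := ∀ v : V, ¬ Relation.TransGen G.E v v

/-- Number of edges of the digraph. -/
noncomputable def edgeCount (G : WDigraph V) : ℕ := Nat.card {p : V × V // G.E p.1 p.2}

end WDigraph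

section Aux

lemma WDigraph.PathW.append {V : Type} {G : WDigraph V} {u v w : V} {c c' : ℝ}
    (h : G.PathW u v c) (h' : G.PathW v w c') : G.PathW u w (c + c') := by
  induction h with
  | nil u => simpa using h'
  | cons e p ih => rw [add_assoc]; exact .cons e (ih h')

lemma WDigraph.dist_triangle {V : Type} (G : WDigraph V) (u v w : V) :
    G.dist u w ≤ G.dist u v + G.dist v w := by
  unfold WDigraph.dist
  simp only [ENNReal.iInf_add, ENNReal.add_iInf]
  refine le_iInf fun a => le_iInf fun ha => le_iInf fun b => le_iInf fun hb => ?_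
  calc (⨅ (c : ℝ) (_ : G.PathW u w c), ENNReal.ofReal c)
      ≤ ENNReal.ofReal (b + a) := iInf₂_le (b + a) (hb.append ha)
    _ ≤ ENNReal.ofReal b + ENNReal.ofReal a := ENNReal.ofReal_add_le

/-- The up-closed-threshold set for a function `f` on indices `[t, q]`. -/
def AS (f : ℕ → ℝ≥0∞) (t q : ℕ) : Set ℝ≥0∞ :=
  {R | (⨅ i ∈ Finset.Icc t q, f i) ≤ R ∧
    ∀ i, t ≤ i → i ≤ q → f i ≤ R → ∀ j, i ≤ j → j ≤ q → f j ≤ R}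

lemma isLeast_AS (f : ℕ → ℝ≥0∞) (t q : ℕ) : IsLeast (AS f t q) (sInf (AS f t q)) := by
  refine ⟨⟨le_sInf fun R hR => hR.1, ?_⟩, fun R hR => sInf_le hR⟩
  intro i hti hiq hfi j hij hjq
  by_contra hgt
  obtain ⟨R, hRA, hR⟩ := sInf_lt_iff.mp (not_le.mp hgt)
  exact absurd (hRA.2 i hti hiq (hfi.trans (sInf_le hRA)) j hij hjq) (not_le.mpr hR)

lemma exists_inf_attained {s : Finset ℕ} (hs : s.Nonempty) (f : ℕ → ℝ≥0∞) :
    ∃ i ∈ s, (⨅ j ∈ s, f j) = f i := by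
  obtain ⟨i, hi, h⟩ := Finset.exists_mem_eq_inf s hs f
  exact ⟨i, hi, by rw [← Finset.inf_eq_iInf]; exact h⟩

/-- Key combinatorial lemma, by downward induction on `t`. -/
lemma key_lemma (f : ℕ → ℝ≥0∞) (D : ℕ → ℕ → ℝ≥0∞) (q : ℕ)
    (htri : ∀ a b, a ≤ b → b ≤ q → f b ≤ f a + D a b)
    (hD : ∀ a b a' b', a' ≤ a → a ≤ b → b ≤ b' → b' ≤ q → D a b ≤ D a' b')
    (hDsum : ∀ a b c d, a ≤ b → b ≤ c → c ≤ d → d ≤ q → D a b + D c d ≤ D a d) :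
    ∀ n t, q ≤ t + n → t ≤ q →
      sInf (AS f t q) ≤ (⨅ i ∈ Finset.Icc t q, f i)
        + D (sInf {i | t ≤ i ∧ i ≤ q ∧ f i ≤ sInf (AS f t q)}) q := by
  intro n
  induction n with
  | zero =>
    intro t hqt htq
    have htq' : t = q := le_antisymm htq (by omega)
    subst htq'
    have hρ : (⨅ i ∈ Finset.Icc t t, f i) = f t := by simp
    have hmem : f t ∈ AS f t t := by
      refine ⟨hρ.le, fun i hti hit hfi j hij hjt => ?_⟩
      have hj : j = t := le_antisymm hjt (le_trans hti hij)
      have hi : i = t := le_antisymm hit hti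
      subst hj; subst hi; exact hfi
    calc sInf (AS f t t) ≤ f t := sInf_le hmem
      _ = ⨅ i ∈ Finset.Icc t t, f i := hρ.symm
      _ ≤ _ := le_self_add
  | succ n ih =>
    intro t hqt htq
    set ρ := ⨅ i ∈ Finset.Icc t q, f i with hρdef
    set η := sInf (AS f t q) with hηdef
    have hA := isLeast_AS f t q
    have hρη : ρ ≤ η := hA.1.1
    have hup := hA.1.2
    -- a global minimizer on [t, q]
    obtain ⟨i0, hi0mem, hfi0⟩ :=
      exists_inf_attained (s := Finset.Icc t q) ⟨t, by simp [htq]⟩ f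
    rw [Finset.mem_Icc] at hi0mem
    rw [← hρdef] at hfi0
    obtain ⟨hti0, hi0q⟩ := hi0mem
    -- m
    set Mset := {i | t ≤ i ∧ i ≤ q ∧ f i ≤ η} with hMdef
    have hi0M : i0 ∈ Mset := ⟨hti0, hi0q, hfi0 ▸ hρη⟩
    have hMne : Mset.Nonempty := ⟨i0, hi0M⟩
    set m := sInf Mset with hmdef
    have hm : m ∈ Mset := Nat.sInf_mem hMne
    have hmlb : ∀ i ∈ Mset, m ≤ i := fun i hi => Nat.sInf_le hi
    have hmi0 : m ≤ i0 := hmlb i0 hi0M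
    have htm : t ≤ m := hm.1
    have hmq : m ≤ q := hm.2.1
    -- every j ∈ [m, q] has f j ≤ η
    have hsub : ∀ j, m ≤ j → j ≤ q → f j ≤ η :=
      fun j hmj hjq => hup m hm.1 hm.2.1 hm.2.2 j hmj hjq
    -- η equals the max of f on [m, q]
    set B := (Finset.Icc m q).sup f with hBdef
    have hBle : B ≤ η := Finset.sup_le fun j hj => by
      rw [Finset.mem_Icc] at hj; exact hsub j hj.1 hj.2
    have hBmem : B ∈ AS f t q := by
      constructor
      · calc ρ = f i0 := hfi0
          _ ≤ B := Finset.le_sup (by rw [Finset.mem_Icc]; exact ⟨hmi0, hi0q⟩)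
      · intro i hti hiq hfi j hij hjq
        have him : m ≤ i := hmlb i ⟨hti, hiq, hfi.trans hBle⟩
        exact Finset.le_sup (by rw [Finset.mem_Icc]; exact ⟨him.trans hij, hjq⟩)
    have hηB : η = B := le_antisymm (hA.2 hBmem) hBle
    obtain ⟨j1, hj1mem, hj1⟩ :=
      Finset.exists_mem_eq_sup (Finset.Icc m q)
        ⟨m, by rw [Finset.mem_Icc]; exact ⟨le_rfl, hmq⟩⟩ f
    rw [Finset.mem_Icc] at hj1mem
    rw [← hBdef] at hj1
    obtain ⟨hmj1, hj1q⟩ := hj1mem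
    have hηj1 : η = f j1 := hηB.trans hj1
    by_cases hcase : i0 ≤ j1
    · calc η = f j1 := hηj1
        _ ≤ f i0 + D i0 j1 := htri i0 j1 hcase hj1q
        _ = ρ + D i0 j1 := by rw [← hfi0]
        _ ≤ ρ + D m q := add_le_add_right (hD i0 j1 m q hmi0 hcase hj1q le_rfl) ρ
    · push_neg at hcase
      have ht'i0 : j1 + 1 ≤ i0 := hcase
      have ht'q : j1 + 1 ≤ q := ht'i0.trans hi0q
      set ρ' := ⨅ i ∈ Finset.Icc (j1 + 1) q, f i with hρ'def
      have hρ'le : ρ' ≤ f i0 := by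
        rw [hρ'def]
        exact iInf₂_le i0 (by rw [Finset.mem_Icc]; exact ⟨ht'i0, hi0q⟩)
      have hρle' : ρ ≤ ρ' := by
        rw [hρdef, hρ'def]
        refine le_iInf₂ fun i hi => ?_
        rw [Finset.mem_Icc] at hi
        exact iInf₂_le i (by rw [Finset.mem_Icc]; exact ⟨by omega, hi.2⟩)
      have hρ'ρ : ρ' = ρ := le_antisymm (hρ'le.trans_eq hfi0.symm) hρle'
      set η' := sInf (AS f (j1 + 1) q) with hη'def
      set m' := sInf {i | j1 + 1 ≤ i ∧ i ≤ q ∧ f i ≤ η'} with hm'def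
      have hA' := isLeast_AS f (j1 + 1) q
      have hIH : η' ≤ ρ' + D m' q := ih (j1 + 1) (by omega) ht'q
      have hi0M' : i0 ∈ {i | j1 + 1 ≤ i ∧ i ≤ q ∧ f i ≤ η'} :=
        ⟨ht'i0, hi0q, by rw [← hfi0, ← hρ'ρ]; exact hA'.1.1⟩
      have hm'mem : m' ∈ {i | j1 + 1 ≤ i ∧ i ≤ q ∧ f i ≤ η'} := Nat.sInf_mem ⟨i0, hi0M'⟩
      have ht'm' : j1 + 1 ≤ m' := hm'mem.1
      have hm'q : m' ≤ q := hm'mem.2.1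
      by_cases hord : η ≤ η'
      · calc η ≤ η' := hord
          _ ≤ ρ' + D m' q := hIH
          _ = ρ + D m' q := by rw [hρ'ρ]
          _ ≤ ρ + D m q := add_le_add_right (hD m' q m q (by omega) hm'q le_rfl le_rfl) ρ
      · push_neg at hord
        have hex : ∃ i, m ≤ i ∧ i ≤ j1 ∧ f i ≤ η' := by
          by_contra hno
          push_neg at hno
          have hmemA : η' ∈ AS f t q := by
            refine ⟨(hρ'ρ.symm.le).trans hA'.1.1, ?_⟩
            intro i hti hiq hfi j hij hjq
            have him : m ≤ i := hmlb i ⟨hti, hiq, hfi.trans hord.le⟩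
            rcases le_or_gt i j1 with h1 | h2
            · exact absurd hfi (not_le.mpr (hno i him h1))
            · exact hA'.1.2 i h2 hiq hfi j hij hjq
          exact absurd (hA.2 hmemA) (not_le.mpr hord)
        obtain ⟨i, hmi, hij1, hfiη'⟩ := hex
        calc η = f j1 := hηj1
          _ ≤ f i + D i j1 := htri i j1 hij1 hj1q
          _ ≤ η' + D m j1 := add_le_add hfiη' (hD i j1 m j1 hmi hij1 le_rfl hj1q)
          _ ≤ (ρ' + D m' q) + D m j1 := add_le_add_left hIH _
          _ = ρ + (D m j1 + D m' q) := by rw [hρ'ρ]; ring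
          _ ≤ ρ + D m q := add_le_add_right
              (hDsum m j1 m' q hmj1 (by omega) hm'q le_rfl) ρ

end Aux

/-- for a shortest path `π = (v₀,…,v_q)` in `G` and a vertex `x` from which
some vertex of `π` is reachable, with `ρ = min_i d_G(x, v_i)` and
`S(R) = {i : d_G(x,v_i) ≤ R}`, the set `{R ≥ ρ : S(R) is upward closed}` has a least
element `η`, and for `m = min S(η)` we have `η − ρ ≤ d_G(v_m, v_q)`. -/
theorem eta_exists_and_close_to_rho {V : Type} [Fintype V] (G : WDigraph V)
    (q : ℕ) (z : ℕ → V)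
    (hedge : ∀ i, i < q → G.E (z i) (z (i + 1)))
    (hshort : ∀ a b : ℕ, a ≤ b → b ≤ q →
      G.dist (z a) (z b) = ENNReal.ofReal (∑ i ∈ Finset.Ico a b, G.w (z i) (z (i + 1))))
    (x : V) (hreach : ∃ i, i ≤ q ∧ G.Reach x (z i)) :
    ∃ η : ℝ≥0∞,
      IsLeast {R : ℝ≥0∞ |
        (⨅ i ∈ Finset.Iic q, G.dist x (z i)) ≤ R ∧
        ∀ i, i ≤ q → G.dist x (z i) ≤ R →
          ∀ j, i ≤ j → j ≤ q → G.dist x (z j) ≤ R} η ∧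
      η - (⨅ i ∈ Finset.Iic q, G.dist x (z i)) ≤
        G.dist (z (sInf {i : ℕ | i ≤ q ∧ G.dist x (z i) ≤ η})) (z q) := by
  classical
  have hw : ∀ i, i < q → 0 ≤ G.w (z i) (z (i + 1)) :=
    fun i hi => (G.w_pos _ _ (hedge i hi)).le
  have hsnn : ∀ a b : ℕ, b ≤ q → 0 ≤ ∑ i ∈ Finset.Ico a b, G.w (z i) (z (i + 1)) := by
    intro a b hb
    refine Finset.sum_nonneg fun i hi => hw i ?_
    rw [Finset.mem_Ico] at hi; omega
  have htri : ∀ a b, a ≤ b → b ≤ q →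
      G.dist x (z b) ≤ G.dist x (z a)
        + ENNReal.ofReal (∑ i ∈ Finset.Ico a b, G.w (z i) (z (i + 1))) := by
    intro a b hab hbq
    have h := G.dist_triangle x (z a) (z b)
    rwa [hshort a b hab hbq] at h
  have hD : ∀ a b a' b', a' ≤ a → a ≤ b → b ≤ b' → b' ≤ q →
      ENNReal.ofReal (∑ i ∈ Finset.Ico a b, G.w (z i) (z (i + 1)))
        ≤ ENNReal.ofReal (∑ i ∈ Finset.Ico a' b', G.w (z i) (z (i + 1))) := by
    intro a b a' b' h1 h2 h3 h4
    refine ENNReal.ofReal_le_ofReal ?_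
    refine Finset.sum_le_sum_of_subset_of_nonneg (Finset.Ico_subset_Ico h1 h3) ?_
    intro i hi _
    rw [Finset.mem_Ico] at hi
    exact hw i (by omega)
  have hDsum : ∀ a b c d : ℕ, a ≤ b → b ≤ c → c ≤ d → d ≤ q →
      ENNReal.ofReal (∑ i ∈ Finset.Ico a b, G.w (z i) (z (i + 1)))
        + ENNReal.ofReal (∑ i ∈ Finset.Ico c d, G.w (z i) (z (i + 1)))
        ≤ ENNReal.ofReal (∑ i ∈ Finset.Ico a d, G.w (z i) (z (i + 1))) := by
    intro a b c d h1 h2 h3 h4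
    rw [← ENNReal.ofReal_add (hsnn a b (by omega)) (hsnn c d h4)]
    refine ENNReal.ofReal_le_ofReal ?_
    have hdisj : Disjoint (Finset.Ico a b) (Finset.Ico c d) := by
      refine Finset.disjoint_left.mpr fun i hi hi' => ?_
      rw [Finset.mem_Ico] at hi hi'; omega
    rw [← Finset.sum_union hdisj]
    refine Finset.sum_le_sum_of_subset_of_nonneg ?_ ?_
    · intro i hi
      simp only [Finset.mem_union, Finset.mem_Ico] at hi ⊢
      omega
    · intro i hi _
      rw [Finset.mem_Ico] at hi
      exact hw i (by omega)
  have hkey := key_lemma (fun k => G.dist x (z k))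
    (fun a b => ENNReal.ofReal (∑ i ∈ Finset.Ico a b, G.w (z i) (z (i + 1)))) q
    htri hD hDsum q 0 (by omega) (Nat.zero_le q)
  have hIcc : Finset.Icc 0 q = Finset.Iic q := by ext i; simp
  refine ⟨sInf (AS (fun k => G.dist x (z k)) 0 q), ?_, ?_⟩
  · have e1 : {R : ℝ≥0∞ |
        (⨅ i ∈ Finset.Iic q, G.dist x (z i)) ≤ R ∧
        ∀ i, i ≤ q → G.dist x (z i) ≤ R →
          ∀ j, i ≤ j → j ≤ q → G.dist x (z j) ≤ R}
        = AS (fun k => G.dist x (z k)) 0 q := by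
      ext R
      simp only [Set.mem_setOf_eq, AS, hIcc]
      exact ⟨fun ⟨h1, h2⟩ => ⟨h1, fun i _ hiq => h2 i hiq⟩,
        fun ⟨h1, h2⟩ => ⟨h1, fun i hiq => h2 i (Nat.zero_le i) hiq⟩⟩
    rw [e1]
    exact isLeast_AS _ 0 q
  · have hρη : (⨅ i ∈ Finset.Icc 0 q, G.dist x (z i))
        ≤ sInf (AS (fun k => G.dist x (z k)) 0 q) :=
      (isLeast_AS (fun k => G.dist x (z k)) 0 q).1.1
    obtain ⟨i0, hi0mem, hfi0⟩ :=
      exists_inf_attained (s := Finset.Icc 0 q) ⟨0, by simp⟩ (fun k => G.dist x (z k))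
    rw [Finset.mem_Icc] at hi0mem
    have hi0in : i0 ∈ {i : ℕ | i ≤ q ∧
        G.dist x (z i) ≤ sInf (AS (fun k => G.dist x (z k)) 0 q)} :=
      ⟨hi0mem.2, hfi0.symm.trans_le hρη⟩
    have hmem := Nat.sInf_mem ⟨i0, hi0in⟩
    have hmq : sInf {i : ℕ | i ≤ q ∧
        G.dist x (z i) ≤ sInf (AS (fun k => G.dist x (z k)) 0 q)} ≤ q := hmem.1
    have hmeq : {i : ℕ | i ≤ q ∧
        G.dist x (z i) ≤ sInf (AS (fun k => G.dist x (z k)) 0 q)}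
        = {i : ℕ | 0 ≤ i ∧ i ≤ q ∧
        (fun k => G.dist x (z k)) i ≤ sInf (AS (fun k => G.dist x (z k)) 0 q)} := by
      ext i; simp
    rw [tsub_le_iff_right, hshort _ q hmq le_rfl, ← hIcc, hmeq, add_comm]
    exact hkey
end

section
/- Let G = (V, E, w) be a weighted digraph on n vertices. Then there exist two weighted DAGs D₁ and D₂ on the vertex set V, each with at most n(n−1)/2 edges, such that: (i) d_G(u, v) ≤ d_{D₁}(u, v) and d_G(u, v) ≤ d_{D₂}(u, v) for all u, v ∈ V; and (ii) for every u ≠ v with u ⇝_G v, exactly one of u ⇝_{D₁} v and u ⇝_{D₂} v holds, and min(d_{D₁}(u, v), d_{D₂}(u, v)) = d_G(u, v). -/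
open scoped ENNReal BigOperators

section Auxiliary

namespace WDigraph

variable {V : Type}

lemma pathW_nonneg {G : WDigraph V} {u v : V} {c : ℝ} (h : G.PathW u v c) : 0 ≤ c := by
  induction h with
  | nil => exact le_refl 0
  | cons he _ ih => exact add_nonneg (le_of_lt (G.w_pos _ _ he)) ih

lemma pathW_concat {G : WDigraph V} {u x v : V} {c₁ c₂ : ℝ}
    (h₁ : G.PathW u x c₁) (h₂ : G.PathW x v c₂) : G.PathW u v (c₁ + c₂) := by
  induction h₁ with
  | nil => simpa using h₂
  | cons he _ ih => rw [add_assoc]; exact PathW.cons he (ih h₂)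

lemma reach_of_pathW {G : WDigraph V} {u v : V} {c : ℝ} (h : G.PathW u v c) : G.Reach u v := by
  induction h with
  | nil => exact Relation.ReflTransGen.refl
  | cons he _ ih => exact Relation.ReflTransGen.head he ih

lemma exists_pathW_of_reach {G : WDigraph V} {u v : V} (h : G.Reach u v) :
    ∃ c : ℝ, G.PathW u v c := by
  induction h using Relation.ReflTransGen.head_induction_on with
  | refl => exact ⟨0, PathW.nil v⟩
  | head he _ ih => exact ⟨_, PathW.cons he ih.choose_spec⟩

lemma dist_le_of_pathW {G : WDigraph V} {u v : V} {c : ℝ} (h : G.PathW u v c) :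
    G.dist u v ≤ ENNReal.ofReal c :=
  iInf₂_le c h

lemma dist_ne_top_of_reach {G : WDigraph V} {u v : V} (h : G.Reach u v) :
    G.dist u v ≠ ⊤ := by
  obtain ⟨c, hc⟩ := exists_pathW_of_reach h
  exact ne_top_of_le_ne_top ENNReal.ofReal_ne_top (dist_le_of_pathW hc)

lemma dist_eq_top_of_not_reach {G : WDigraph V} {u v : V} (h : ¬ G.Reach u v) :
    G.dist u v = ⊤ :=
  le_antisymm le_top (le_iInf₂ fun _ hc => absurd (reach_of_pathW hc) h)

lemma dist_triangle_s12 {G : WDigraph V} (u x v : V) :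
    G.dist u v ≤ G.dist u x + G.dist x v := by
  have key : G.dist u x + G.dist x v
      = ⨅ (c₁ : ℝ) (_ : G.PathW u x c₁) (c₂ : ℝ) (_ : G.PathW x v c₂),
          (ENNReal.ofReal c₁ + ENNReal.ofReal c₂) := by
    rw [dist, dist, ENNReal.iInf_add]
    refine iInf_congr fun c₁ => ?_
    rw [ENNReal.iInf_add]
    refine iInf_congr fun h₁ => ?_
    rw [ENNReal.add_iInf]
    refine iInf_congr fun c₂ => ?_
    rw [ENNReal.add_iInf]
  rw [key]
  refine le_iInf₂ fun c₁ h₁ => le_iInf₂ fun c₂ h₂ => ?_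
  rw [← ENNReal.ofReal_add (pathW_nonneg h₁) (pathW_nonneg h₂)]
  exact dist_le_of_pathW (pathW_concat h₁ h₂)

lemma dist_ne_zero [Fintype V] {G : WDigraph V} {u v : V} (h : u ≠ v) :
    G.dist u v ≠ 0 := by
  classical
  obtain ⟨m, hm, hle⟩ : ∃ m : ℝ, 0 < m ∧ ∀ a b : V, G.E a b → m ≤ G.w a b := by
    by_cases he : ∃ p : V × V, G.E p.1 p.2
    · set F : Finset (V × V) := Finset.univ.filter (fun p : V × V => G.E p.1 p.2) with hF
      have hne : F.Nonempty := ⟨he.choose, Finset.mem_filter.mpr ⟨Finset.mem_univ _, he.choose_spec⟩⟩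
      refine ⟨F.inf' hne (fun p => G.w p.1 p.2), ?_, fun a b hab => ?_⟩
      · rw [Finset.lt_inf'_iff]
        intro p hp
        exact G.w_pos p.1 p.2 (Finset.mem_filter.mp hp).2
      · exact Finset.inf'_le (f := fun p : V × V => G.w p.1 p.2) (b := (a, b)) (Finset.mem_filter.mpr ⟨Finset.mem_univ _, hab⟩)
    · exact ⟨1, one_pos, fun a b hab => absurd ⟨(a, b), hab⟩ he⟩
  have hlb : ENNReal.ofReal m ≤ G.dist u v := by
    refine le_iInf₂ fun c hc => ENNReal.ofReal_le_ofReal ?_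
    cases hc with
    | nil => exact absurd rfl h
    | cons he hp => exact le_add_of_le_of_nonneg (hle _ _ he) (pathW_nonneg hp)
  intro h0
  rw [h0, nonpos_iff_eq_zero, ENNReal.ofReal_eq_zero] at hlb
  linarith

/-- One of the two DAGs: edges go strictly up in `f`, between `G`-reachable pairs,
weighted by the `G`-distance. -/
noncomputable def halfDAG [Fintype V] (G : WDigraph V) (f : V → ℕ) : WDigraph V where
  E u v := f u < f v ∧ G.Reach u v
  no_self v h := lt_irrefl _ h.1
  w u v := (G.dist u v).toReal
  w_pos u v h := ENNReal.toReal_pos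
    (dist_ne_zero (fun huv => by subst huv; exact lt_irrefl _ h.1)) (dist_ne_top_of_reach h.2)

variable [Fintype V] {G : WDigraph V} {f : V → ℕ}

lemma halfDAG_mono {a b : V} (h : Relation.TransGen (halfDAG G f).E a b) : f a < f b := by
  induction h with
  | single he => exact he.1
  | tail _ he ih => exact ih.trans he.1

lemma halfDAG_isDAG : (halfDAG G f).IsDAG := fun _ hv => lt_irrefl _ (halfDAG_mono hv)

lemma halfDAG_reach {u v : V} (h : (halfDAG G f).Reach u v) : u = v ∨ f u < f v := by
  rcases (Relation.reflTransGen_iff_eq_or_transGen.mp h) with h | h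
  · exact Or.inl h.symm
  · exact Or.inr (halfDAG_mono h)

lemma dist_le_halfDAG (u v : V) : G.dist u v ≤ (halfDAG G f).dist u v := by
  refine le_iInf₂ fun c hc => ?_
  induction hc with
  | nil u => simpa using dist_le_of_pathW (PathW.nil (G := G) u)
  | @cons a x b c he hp ih =>
    have hax : G.dist a x ≠ ⊤ := dist_ne_top_of_reach he.2
    have hw : ENNReal.ofReal ((halfDAG G f).w a x) = G.dist a x := by
      simpa [halfDAG] using ENNReal.ofReal_toReal hax
    calc G.dist a b ≤ G.dist a x + G.dist x b := dist_triangle_s12 a x b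
      _ ≤ G.dist a x + ENNReal.ofReal c := add_le_add le_rfl ih
      _ = ENNReal.ofReal ((halfDAG G f).w a x) + ENNReal.ofReal c := by rw [hw]
      _ = ENNReal.ofReal ((halfDAG G f).w a x + c) :=
          (ENNReal.ofReal_add (ENNReal.toReal_nonneg) (pathW_nonneg hp)).symm

lemma halfDAG_dist_eq {u v : V} (hf : f u < f v) (h : G.Reach u v) :
    (halfDAG G f).dist u v = G.dist u v := by
  refine le_antisymm ?_ (dist_le_halfDAG u v)
  have hedge : (halfDAG G f).E u v := ⟨hf, h⟩
  have hp : (halfDAG G f).PathW u v ((halfDAG G f).w u v + 0) :=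
    PathW.cons hedge (PathW.nil v)
  have h1 := dist_le_of_pathW hp
  rw [add_zero] at h1
  calc (halfDAG G f).dist u v ≤ ENNReal.ofReal ((halfDAG G f).w u v) := h1
    _ = G.dist u v := by simpa [halfDAG] using ENNReal.ofReal_toReal (dist_ne_top_of_reach h)

lemma halfDAG_reach_of {u v : V} (hf : f u < f v) (h : G.Reach u v) :
    (halfDAG G f).Reach u v :=
  Relation.ReflTransGen.single ⟨hf, h⟩

end WDigraph

/-- The number of strictly increasing pairs in `Fin n × Fin n`. -/
lemma card_lt_pairs (n : ℕ) :
    Nat.card {q : Fin n × Fin n // q.1 < q.2} = n * (n - 1) / 2 := by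
  classical
  rw [Nat.card_eq_fintype_card, Fintype.card_subtype]
  set L : Finset (Fin n × Fin n) := Finset.univ.filter (fun q => q.1 < q.2) with hL
  set R : Finset (Fin n × Fin n) := Finset.univ.filter (fun q => q.2 < q.1) with hR
  have hcard : L.card = R.card := by
    refine Finset.card_bij' (fun q _ => q.swap) (fun q _ => q.swap) ?_ ?_ ?_ ?_
    · intro q hq
      simp only [hL, hR, Finset.mem_filter, Finset.mem_univ, true_and, Prod.fst_swap,
        Prod.snd_swap] at hq ⊢
      exact hq
    · intro q hq
      simp only [hL, hR, Finset.mem_filter, Finset.mem_univ, true_and, Prod.fst_swap,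
        Prod.snd_swap] at hq ⊢
      exact hq
    · intro q _; simp
    · intro q _; simp
  have hunion : L ∪ R = (Finset.univ : Finset (Fin n)).offDiag := by
    ext q
    simp only [hL, hR, Finset.mem_union, Finset.mem_filter, Finset.mem_univ, true_and,
      Finset.mem_offDiag]
    exact ne_iff_lt_or_gt.symm
  have hdisj : Disjoint L R := by
    rw [Finset.disjoint_left]
    intro q hq hq'
    simp only [hL, hR, Finset.mem_filter] at hq hq'
    exact absurd (hq.2.trans hq'.2) (lt_irrefl _)
  have h2 : L.card + R.card = n * n - n := by
    rw [← Finset.card_union_of_disjoint hdisj, hunion, Finset.offDiag_card]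
    simp
  have hn : n * n - n = n * (n - 1) := by
    cases n with
    | zero => rfl
    | succ k => rw [Nat.succ_sub_one, Nat.mul_succ]; omega
  rw [hcard] at h2
  omega

end Auxiliary

/-- every weighted digraph on `n` vertices admits two weighted DAGs
`D₁, D₂` on the same vertex set, each with at most `n(n−1)/2` edges, dominating the
distances of `G`, and such that for every reachable pair `u ≠ v` exactly one of the two
DAGs preserves the reachability and `min(d_{D₁}(u,v), d_{D₂}(u,v)) = d_G(u,v)`. -/
theorem two_dags_exact_distances {V : Type} [Fintype V] (G : WDigraph V) :
    ∃ D₁ D₂ : WDigraph V,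
      D₁.IsDAG ∧ D₂.IsDAG ∧
      D₁.edgeCount ≤ Fintype.card V * (Fintype.card V - 1) / 2 ∧
      D₂.edgeCount ≤ Fintype.card V * (Fintype.card V - 1) / 2 ∧
      (∀ u v : V, G.dist u v ≤ D₁.dist u v ∧ G.dist u v ≤ D₂.dist u v) ∧
      (∀ u v : V, u ≠ v → G.Reach u v →
        Xor' (D₁.Reach u v) (D₂.Reach u v) ∧
        min (D₁.dist u v) (D₂.dist u v) = G.dist u v) := by
  classical
  set n := Fintype.card V with hn
  set e : V ≃ Fin n := Fintype.equivFin V with he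
  set f₁ : V → ℕ := fun v => (e v : ℕ) with hf₁
  set f₂ : V → ℕ := fun v => n - (e v : ℕ) with hf₂
  have hf₂_iff : ∀ u v : V, f₂ u < f₂ v ↔ f₁ v < f₁ u := by
    intro u v
    have h1 : (e u : ℕ) < n := (e u).2
    have h2 : (e v : ℕ) < n := (e v).2
    simp only [hf₁, hf₂]
    omega
  refine ⟨G.halfDAG f₁, G.halfDAG f₂, WDigraph.halfDAG_isDAG, WDigraph.halfDAG_isDAG,
    ?_, ?_, ?_, ?_⟩
  · rw [WDigraph.edgeCount, ← card_lt_pairs n]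
    refine Nat.card_le_card_of_injective
      (fun p => ⟨(e p.1.1, e p.1.2), p.2.1⟩) ?_
    intro p q hpq
    simp only [Subtype.mk.injEq, Prod.mk.injEq, EmbeddingLike.apply_eq_iff_eq] at hpq
    exact Subtype.ext (Prod.ext hpq.1 hpq.2)
  · rw [WDigraph.edgeCount, ← card_lt_pairs n]
    refine Nat.card_le_card_of_injective
      (fun p => ⟨(e p.1.2, e p.1.1), by
        have hp := p.2.1
        rw [hf₂_iff] at hp
        exact hp⟩) ?_
    intro p q hpq
    simp only [Subtype.mk.injEq, Prod.mk.injEq, EmbeddingLike.apply_eq_iff_eq] at hpq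
    exact Subtype.ext (Prod.ext hpq.2 hpq.1)
  · intro u v
    exact ⟨WDigraph.dist_le_halfDAG u v, WDigraph.dist_le_halfDAG u v⟩
  · intro u v huv hre
    have hne : f₁ u ≠ f₁ v := fun h => huv (e.injective (Fin.val_injective h))
    rcases lt_or_gt_of_ne hne with hlt | hgt
    · have hr1 : (G.halfDAG f₁).Reach u v := WDigraph.halfDAG_reach_of hlt hre
      have hr2 : ¬ (G.halfDAG f₂).Reach u v := by
        intro h
        rcases WDigraph.halfDAG_reach h with h | h
        · exact huv h
        · rw [hf₂_iff] at h; omega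
      refine ⟨Or.inl ⟨hr1, hr2⟩, ?_⟩
      rw [WDigraph.dist_eq_top_of_not_reach hr2, min_eq_left le_top,
        WDigraph.halfDAG_dist_eq hlt hre]
    · have hr2 : (G.halfDAG f₂).Reach u v :=
        WDigraph.halfDAG_reach_of ((hf₂_iff u v).mpr hgt) hre
      have hr1 : ¬ (G.halfDAG f₁).Reach u v := by
        intro h
        rcases WDigraph.halfDAG_reach h with h | h
        · exact huv h
        · omega
      refine ⟨Or.inr ⟨hr2, hr1⟩, ?_⟩
      rw [WDigraph.dist_eq_top_of_not_reach hr1, min_eq_right le_top,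
        WDigraph.halfDAG_dist_eq ((hf₂_iff u v).mpr hgt) hre]
end
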